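/- Let λ > 0, L : ℝ^{m×n} → ℝ continuous, and let W be a local minimum of 𝓛_*(W) = L(W) + λ‖W‖_* over all m×n matrices. If A ∈ ℝ^{m×r}, B ∈ ℝ^{n×r} satisfy W = ABᵀ and AᵀA = BᵀB, then (A, B) is a local minimum of 𝓛_{L2}(A,B) = L(ABᵀ) + (λ/2)(‖A‖_F² + ‖B‖_F²). -/

import Mathlib

open Matrix

/-- Squared Frobenius norm of a real matrix. -/
noncomputable def frobSq {m n : ℕ} (A : Matrix (Fin m) (Fin n) ℝ) : ℝ :=
  ∑ i, ∑ j, (A i j) ^ 2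

/-- Frobenius norm. -/
noncomputable def frobNorm {m n : ℕ} (A : Matrix (Fin m) (Fin n) ℝ) : ℝ :=
  Real.sqrt (frobSq A)

lemma wwT_posSemidef {m n : ℕ} (W : Matrix (Fin m) (Fin n) ℝ) :
    (W * Wᵀ).PosSemidef := by
  simpa [Matrix.conjTranspose_eq_transpose_of_trivial] using
    W.posSemidef_self_mul_conjTranspose

/-- Nuclear norm: trace of the PSD square root of `W * Wᵀ`. -/
noncomputable def nuclearNorm {m n : ℕ} (W : Matrix (Fin m) (Fin n) ℝ) : ℝ :=
  ((wwT_posSemidef W).1.eigenvectorUnitary.1 *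
    diagonal (Real.sqrt ∘ (wwT_posSemidef W).1.eigenvalues) *
    (star (wwT_posSemidef W).1.eigenvectorUnitary : Matrix (Fin m) (Fin m) ℝ)).trace

attribute [local instance] Matrix.normedAddCommGroup Matrix.normedSpace

/-! ### Auxiliary lemmas -/

lemma frobSq_eq_trace {m n : ℕ} (X : Matrix (Fin m) (Fin n) ℝ) :
    frobSq X = (X * Xᵀ).trace := by
  simp [frobSq, Matrix.trace, Matrix.diag, Matrix.mul_apply, sq]

lemma frobSq_nonneg {m n : ℕ} (X : Matrix (Fin m) (Fin n) ℝ) : 0 ≤ frobSq X :=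
  Finset.sum_nonneg fun _ _ => Finset.sum_nonneg fun _ _ => sq_nonneg _

/-- Trace of the PSD square root, as a sum of square roots of eigenvalues. -/
lemma trace_sqrt_eq {k : ℕ} {H : Matrix (Fin k) (Fin k) ℝ} (hH : H.PosSemidef) :
    (hH.1.eigenvectorUnitary.1 * diagonal (Real.sqrt ∘ hH.1.eigenvalues) *
      (star hH.1.eigenvectorUnitary : Matrix (Fin k) (Fin k) ℝ)).trace
      = ∑ i, Real.sqrt (hH.1.eigenvalues i) := by
  rw [Matrix.trace_mul_cycle]
  rw [show (star hH.1.eigenvectorUnitary : Matrix (Fin k) (Fin k) ℝ) *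
        (hH.1.eigenvectorUnitary : Matrix (Fin k) (Fin k) ℝ) = 1 from
      Unitary.coe_star_mul_self _]
  rw [Matrix.one_mul, Matrix.trace_diagonal]
  simp [RCLike.ofReal_real_eq_id]

/-- Equality at a balanced factorization. -/
lemma nuclearNorm_balanced {m n r : ℕ} (A : Matrix (Fin m) (Fin r) ℝ)
    (B : Matrix (Fin n) (Fin r) ℝ) (hbal : Aᵀ * A = Bᵀ * B) :
    nuclearNorm (A * Bᵀ) = frobSq A := by
  have hAAT : (A * Aᵀ).PosSemidef := wwT_posSemidef A
  have hsq : (A * Aᵀ) ^ 2 = (A * Bᵀ) * (A * Bᵀ)ᵀ := by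
    rw [pow_two, Matrix.transpose_mul, Matrix.transpose_transpose]
    calc A * Aᵀ * (A * Aᵀ) = A * (Aᵀ * A) * Aᵀ := by
          simp only [Matrix.mul_assoc]
      _ = A * (Bᵀ * B) * Aᵀ := by rw [hbal]
      _ = A * Bᵀ * (B * Aᵀ) := by simp only [Matrix.mul_assoc]
  have h : (wwT_posSemidef (A * Bᵀ)).1.cfc Real.sqrt = A * Aᵀ := by
    open scoped MatrixOrder in
    rw [← Matrix.IsHermitian.cfc_eq, ← hsq, ← cfcₙ_eq_cfc,
      ← CFC.sqrt_eq_real_sqrt _ (by rw [hsq]; exact (wwT_posSemidef _).nonneg)]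
    exact CFC.sqrt_sq _ hAAT.nonneg
  rw [nuclearNorm, frobSq_eq_trace, ← h, Matrix.IsHermitian.cfc, Unitary.conjStarAlgAut_apply]
  rfl

lemma frobSq_eq_of_balanced {m n r : ℕ} (A : Matrix (Fin m) (Fin r) ℝ)
    (B : Matrix (Fin n) (Fin r) ℝ) (hbal : Aᵀ * A = Bᵀ * B) :
    frobSq A = frobSq B := by
  rw [frobSq_eq_trace, frobSq_eq_trace, Matrix.trace_mul_comm A Aᵀ, hbal,
    Matrix.trace_mul_comm Bᵀ B]

lemma trace_transpose_mul_le {p q : ℕ} (X Y : Matrix (Fin p) (Fin q) ℝ) :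
    (Xᵀ * Y).trace ≤ (frobSq X + frobSq Y) / 2 := by
  have h1 : (Xᵀ * Y).trace = ∑ i : Fin p, ∑ j : Fin q, X i j * Y i j := by
    rw [Matrix.trace]
    simp only [Matrix.diag, Matrix.mul_apply, Matrix.transpose_apply]
    exact Finset.sum_comm
  have h2 : (frobSq X + frobSq Y) / 2
      = ∑ i : Fin p, ∑ j : Fin q, (X i j ^ 2 + Y i j ^ 2) / 2 := by
    simp only [frobSq, ← Finset.sum_add_distrib, ← Finset.sum_div]
  rw [h1, h2]
  refine Finset.sum_le_sum fun i _ => Finset.sum_le_sum fun j _ => ?_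
  nlinarith [sq_nonneg (X i j - Y i j)]

/-- The key inequality: `‖A Bᵀ‖_* ≤ (‖A‖_F² + ‖B‖_F²) / 2`. -/
lemma nuclearNorm_le_half_frobSq {m n r : ℕ} (A : Matrix (Fin m) (Fin r) ℝ)
    (B : Matrix (Fin n) (Fin r) ℝ) :
    nuclearNorm (A * Bᵀ) ≤ (frobSq A + frobSq B) / 2 := by
  set M : Matrix (Fin m) (Fin n) ℝ := A * Bᵀ with hM
  have hH := wwT_posSemidef M
  set lam : Fin m → ℝ := hH.1.eigenvalues with hlamdef
  have hlam0 : ∀ i, 0 ≤ lam i := hH.eigenvalues_nonneg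
  set U : Matrix (Fin m) (Fin m) ℝ := (hH.1.eigenvectorUnitary : Matrix (Fin m) (Fin m) ℝ) with hUdef
  have hUstar : star U = Uᵀ := by
    rw [Matrix.star_eq_conjTranspose, Matrix.conjTranspose_eq_transpose_of_trivial]
  have hU1 : Uᵀ * U = 1 := by
    rw [← hUstar]; exact Unitary.coe_star_mul_self _
  have hU2 : U * Uᵀ = 1 := by
    rw [← hUstar]; exact Unitary.coe_mul_star_self _
  have hspec : Uᵀ * (M * Mᵀ) * U = Matrix.diagonal lam := by
    have := hH.1.spectral_theorem
    rw [Unitary.conjStarAlgAut_apply, ← hUdef, hUstar] at this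
    conv_lhs => rw [this]
    simp only [← Matrix.mul_assoc, hU1, Matrix.one_mul]
    rw [Matrix.mul_assoc, hU1, Matrix.mul_one]
    simp [RCLike.ofReal_real_eq_id, lam]
  have hMM : M * Mᵀ = U * Matrix.diagonal lam * Uᵀ := by
    calc M * Mᵀ = (U * Uᵀ) * (M * Mᵀ) * (U * Uᵀ) := by rw [hU2]; simp [Matrix.mul_assoc]
      _ = U * (Uᵀ * (M * Mᵀ) * U) * Uᵀ := by simp only [Matrix.mul_assoc]
      _ = U * Matrix.diagonal lam * Uᵀ := by rw [hspec]
  set c : Fin m → ℝ := fun i => if lam i = 0 then 0 else (Real.sqrt (lam i))⁻¹ with hcdef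
  set V : Matrix (Fin n) (Fin m) ℝ := Mᵀ * U * Matrix.diagonal c with hVdef
  -- (b)  Uᵀ M V = diagonal (√λ)
  have hb : Uᵀ * M * V = Matrix.diagonal (fun i => Real.sqrt (lam i)) := by
    have : Uᵀ * M * V = (Uᵀ * (M * Mᵀ) * U) * Matrix.diagonal c := by
      rw [hVdef]; simp only [Matrix.mul_assoc]
    rw [this, hspec, Matrix.diagonal_mul_diagonal]
    have key : (fun i => lam i * c i) = fun i => Real.sqrt (lam i) := by
      funext i
      by_cases h : lam i = 0
      · simp [c, h]
      · simp only [c, if_neg h]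
        have hs : Real.sqrt (lam i) * Real.sqrt (lam i) = lam i := Real.mul_self_sqrt (hlam0 i)
        have hsne : Real.sqrt (lam i) ≠ 0 := fun h0 => h (by rw [← hs, h0, mul_zero])
        field_simp <;> linarith [hs]
    exact congrArg Matrix.diagonal key
  -- (a)  Vᵀ V = diagonal e with e i ∈ {0,1}
  set e : Fin m → ℝ := fun i => if lam i = 0 then 0 else 1 with hedef
  have ha : Vᵀ * V = Matrix.diagonal e := by
    have hVT : Vᵀ = Matrix.diagonal c * (Uᵀ * M) := by
      rw [hVdef, Matrix.transpose_mul, Matrix.transpose_mul, Matrix.transpose_transpose,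
        Matrix.diagonal_transpose]
    rw [hVT, hVdef]
    have : Matrix.diagonal c * (Uᵀ * M) * (Mᵀ * U * Matrix.diagonal c)
        = Matrix.diagonal c * (Uᵀ * (M * Mᵀ) * U) * Matrix.diagonal c := by
      simp only [Matrix.mul_assoc]
    rw [this, hspec, Matrix.diagonal_mul_diagonal, Matrix.diagonal_mul_diagonal]
    have key : (fun i => (fun i => c i * lam i) i * c i) = e := by
      funext i
      by_cases h : lam i = 0
      · simp [c, e, h]
      · simp only [c, e, if_neg h]
        have hs : Real.sqrt (lam i) * Real.sqrt (lam i) = lam i := Real.mul_self_sqrt (hlam0 i)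
        have hsne : Real.sqrt (lam i) ≠ 0 := fun h0 => h (by rw [← hs, h0, mul_zero])
        field_simp <;> linarith [hs]
    exact congrArg Matrix.diagonal key
  -- (c)  V * diagonal e = V
  have hc : V * Matrix.diagonal e = V := by
    have key : (fun i => c i * e i) = c := by
      funext i
      by_cases h : lam i = 0 <;> simp [c, e, h]
    rw [hVdef, Matrix.mul_assoc, Matrix.diagonal_mul_diagonal, key]
  -- nuclearNorm M = trace (Uᵀ M V)
  have htr : nuclearNorm M = (Uᵀ * M * V).trace := by
    rw [nuclearNorm, trace_sqrt_eq hH, hb, Matrix.trace_diagonal]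
  -- trace (Uᵀ M V) = trace ((Aᵀ U)ᵀ * (Bᵀ V))
  have hsplit : Uᵀ * M * V = (Aᵀ * U)ᵀ * (Bᵀ * V) := by
    rw [hM, Matrix.transpose_mul, Matrix.transpose_transpose]
    simp only [Matrix.mul_assoc]
  -- frobSq (Aᵀ U) = frobSq A
  have hfA : frobSq (Aᵀ * U) = frobSq A := by
    rw [frobSq_eq_trace, frobSq_eq_trace, Matrix.transpose_mul, Matrix.transpose_transpose]
    have : Aᵀ * U * (Uᵀ * A) = Aᵀ * (U * Uᵀ) * A := by simp only [Matrix.mul_assoc]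
    rw [this, hU2, Matrix.mul_one, Matrix.trace_mul_comm]
  -- frobSq (Bᵀ V) ≤ frobSq B
  have hfB : frobSq (Bᵀ * V) ≤ frobSq B := by
    have hPT : (V * Vᵀ)ᵀ = V * Vᵀ := by
      rw [Matrix.transpose_mul, Matrix.transpose_transpose]
    have hPP : (V * Vᵀ) * (V * Vᵀ) = V * Vᵀ := by
      calc (V * Vᵀ) * (V * Vᵀ) = V * (Vᵀ * V) * Vᵀ := by simp only [Matrix.mul_assoc]
        _ = V * Matrix.diagonal e * Vᵀ := by rw [ha]
        _ = V * Vᵀ := by rw [hc]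
    have hQT : (1 - V * Vᵀ)ᵀ = 1 - V * Vᵀ := by
      rw [Matrix.transpose_sub, Matrix.transpose_one, hPT]
    have hQQ : (1 - V * Vᵀ) * (1 - V * Vᵀ) = 1 - V * Vᵀ := by
      simp only [Matrix.sub_mul, Matrix.mul_sub, Matrix.one_mul, Matrix.mul_one, hPP]
      abel
    have h1 : frobSq (Bᵀ * V) = (Bᵀ * (V * Vᵀ) * B).trace := by
      rw [frobSq_eq_trace, Matrix.transpose_mul, Matrix.transpose_transpose]
      simp only [Matrix.mul_assoc]
    have h2 : frobSq B = (Bᵀ * B).trace := by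
      rw [frobSq_eq_trace, Matrix.trace_mul_comm]
    have hfq : frobSq ((1 - V * Vᵀ) * B) = (Bᵀ * (1 - V * Vᵀ) * B).trace := by
      rw [frobSq_eq_trace]
      simp only [Matrix.transpose_mul, hQT]
      calc ((1 - V * Vᵀ) * B * (Bᵀ * (1 - V * Vᵀ))).trace
          = (Bᵀ * (1 - V * Vᵀ) * ((1 - V * Vᵀ) * B)).trace := by
            rw [Matrix.trace_mul_comm]
        _ = (Bᵀ * ((1 - V * Vᵀ) * (1 - V * Vᵀ)) * B).trace := by
            simp only [Matrix.mul_assoc]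
        _ = (Bᵀ * (1 - V * Vᵀ) * B).trace := by rw [hQQ]
    have h3 : (Bᵀ * B).trace - (Bᵀ * (V * Vᵀ) * B).trace = frobSq ((1 - V * Vᵀ) * B) := by
      rw [hfq]
      have : Bᵀ * (1 - V * Vᵀ) * B = Bᵀ * B - Bᵀ * (V * Vᵀ) * B := by
        rw [Matrix.mul_sub, Matrix.mul_one, Matrix.sub_mul]
      rw [this, Matrix.trace_sub]
    have h4 : 0 ≤ frobSq ((1 - V * Vᵀ) * B) := frobSq_nonneg _
    rw [h1, h2]
    linarith [h3 ▸ h4]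
  calc nuclearNorm M = ((Aᵀ * U)ᵀ * (Bᵀ * V)).trace := by rw [htr, hsplit]
    _ ≤ (frobSq (Aᵀ * U) + frobSq (Bᵀ * V)) / 2 := trace_transpose_mul_le _ _
    _ ≤ (frobSq A + frobSq B) / 2 := by linarith [hfA, hfB]

/-- if `W` is a local minimum of the nuclear-norm regularized loss
`L(W) + λ‖W‖_*` (λ > 0, L continuous) over all matrices, then any balanced
factorization `W = ABᵀ`, `AᵀA = BᵀB` is a local minimum of the L2-regularized
factorized loss `L(ABᵀ) + (λ/2)(‖A‖_F² + ‖B‖_F²)`. -/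
theorem localMin_nuclear_to_localMin_L2 {m n r : ℕ}
    (lam : ℝ) (hlam : 0 < lam)
    (L : Matrix (Fin m) (Fin n) ℝ → ℝ) (hL : Continuous L)
    (W : Matrix (Fin m) (Fin n) ℝ)
    (hW : IsLocalMin (fun W' : Matrix (Fin m) (Fin n) ℝ =>
      L W' + lam * nuclearNorm W') W)
    (A : Matrix (Fin m) (Fin r) ℝ) (B : Matrix (Fin n) (Fin r) ℝ)
    (hfac : W = A * Bᵀ) (hbal : Aᵀ * A = Bᵀ * B) :
    IsLocalMin
      (fun p : Matrix (Fin m) (Fin r) ℝ × Matrix (Fin n) (Fin r) ℝ =>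
        L (p.1 * p.2ᵀ) + lam / 2 * (frobSq p.1 + frobSq p.2)) (A, B) := by
  have hcont : Continuous (fun p : Matrix (Fin m) (Fin r) ℝ × Matrix (Fin n) (Fin r) ℝ =>
      p.1 * p.2ᵀ) := continuous_fst.matrix_mul continuous_snd.matrix_transpose
  have htend : Filter.Tendsto
      (fun p : Matrix (Fin m) (Fin r) ℝ × Matrix (Fin n) (Fin r) ℝ => p.1 * p.2ᵀ)
      (nhds (A, B)) (nhds W) := by
    have := hcont.tendsto (A, B)
    rwa [← hfac] at this
  have hev := htend.eventually hW
  have heq : L W + lam * nuclearNorm W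
      = L (A * Bᵀ) + lam / 2 * (frobSq A + frobSq B) := by
    rw [hfac, nuclearNorm_balanced A B hbal, ← frobSq_eq_of_balanced A B hbal]
    ring
  refine Filter.Eventually.mono hev fun p hp => ?_
  have hineq : nuclearNorm (p.1 * p.2ᵀ) ≤ (frobSq p.1 + frobSq p.2) / 2 :=
    nuclearNorm_le_half_frobSq p.1 p.2
  have : L (p.1 * p.2ᵀ) + lam * nuclearNorm (p.1 * p.2ᵀ)
      ≤ L (p.1 * p.2ᵀ) + lam / 2 * (frobSq p.1 + frobSq p.2) := by
    nlinarith [hineq, hlam.le]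
  calc L (A * Bᵀ) + lam / 2 * (frobSq A + frobSq B)
      = L W + lam * nuclearNorm W := heq.symm
    _ ≤ L (p.1 * p.2ᵀ) + lam * nuclearNorm (p.1 * p.2ᵀ) := hp
    _ ≤ _ := this
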